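/- Let R be an artinian local ring of finite type over a field k with residue field k. For finite sets σ, let D^σ = Spec(k[x_i : i ∈ σ]/m²) be the first-order neighborhood of the origin in affine σ-space. Then for n ≥ 2 the natural map D^1 ⊔_{D^0} D^{n−1} → D^n exhibits D^n as the pushout: for every scheme Y, Hom(D^n, Y) ≅ Hom(D^1, Y) ×_{Hom(D^0, Y)} Hom(D^{n−1}, Y). -/

import Mathlib

open CategoryTheory AlgebraicGeometry TrivSqZeroExt

section RingFacts

variable (k : Type) [Field k]

instance tsze_isLocalRing (M : Type) [AddCommGroup M] [Module k M] [Module kᵐᵒᵖ M]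
    [IsCentralScalar k M] : IsLocalRing (TrivSqZeroExt k M) :=
  IsLocalRing.of_isUnit_or_isUnit_one_sub_self fun a => by
    rcases eq_or_ne (fst a) 0 with h | h
    · right
      rw [isUnit_iff_isUnit_fst, fst_sub, fst_one, h, sub_zero]
      exact isUnit_one
    · left
      rw [isUnit_iff_isUnit_fst]
      exact isUnit_iff_ne_zero.mpr h

instance tsze_map_isLocalHom (M N : Type) [AddCommGroup M] [Module k M] [Module kᵐᵒᵖ M]
    [IsCentralScalar k M] [AddCommGroup N] [Module k N] [Module kᵐᵒᵖ N] [IsCentralScalar k N]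
    (f : M →ₗ[k] N) : IsLocalHom (TrivSqZeroExt.map f).toRingHom where
  map_nonunit a ha := by
    rw [isUnit_iff_isUnit_fst]
    rw [AlgHom.toRingHom_eq_coe, RingHom.coe_coe, isUnit_iff_isUnit_fst, fst_map] at ha
    exact ha

instance tsze_fstHom_isLocalHom (M : Type) [AddCommGroup M] [Module k M] [Module kᵐᵒᵖ M]
    [IsCentralScalar k M] : IsLocalHom (TrivSqZeroExt.fstHom k k M).toRingHom where
  map_nonunit a ha := by
    rw [isUnit_iff_isUnit_fst]
    exact ha

end RingFacts

section Glue

variable {k : Type} [Field k] {m : ℕ} {S : Type} [CommRing S]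

/-- glue two homs into square-zero extensions agreeing on the base field -/
def glueHom (φ₁ : S →+* TrivSqZeroExt k k) (φ₂ : S →+* TrivSqZeroExt k (Fin m → k))
    (h : ∀ s, fst (φ₁ s) = fst (φ₂ s)) : S →+* TrivSqZeroExt k (Fin (m + 1) → k) where
  toFun s := ⟨fst (φ₁ s), Fin.cons (snd (φ₁ s)) (snd (φ₂ s))⟩
  map_one' := by
    refine TrivSqZeroExt.ext (by simp) ?_
    funext i
    induction i using Fin.cases <;> simp
  map_mul' a b := by
    refine TrivSqZeroExt.ext (by simp; rfl) ?_
    funext i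
    induction i using Fin.cases with
    | zero => simp [smul_eq_mul, mul_comm]; rw [mul_comm (φ₁ b).fst]; rfl
    | succ i => simp [h, smul_eq_mul, mul_comm]; rw [mul_comm (φ₂ b).fst]; rfl
  map_zero' := by
    refine TrivSqZeroExt.ext (by simp) ?_
    funext i
    induction i using Fin.cases <;> simp
  map_add' a b := by
    refine TrivSqZeroExt.ext (by simp; rfl) ?_
    funext i
    induction i using Fin.cases <;> simp <;> rfl

@[simp] lemma glueHom_fst (φ₁ : S →+* TrivSqZeroExt k k)
    (φ₂ : S →+* TrivSqZeroExt k (Fin m → k)) (h) (s : S) :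
    fst (glueHom φ₁ φ₂ h s) = fst (φ₁ s) := rfl

@[simp] lemma glueHom_snd (φ₁ : S →+* TrivSqZeroExt k k)
    (φ₂ : S →+* TrivSqZeroExt k (Fin m → k)) (h) (s : S) :
    snd (glueHom φ₁ φ₂ h s) = Fin.cons (snd (φ₁ s)) (snd (φ₂ s)) := rfl

lemma proj_comp_glueHom (φ₁ : S →+* TrivSqZeroExt k k)
    (φ₂ : S →+* TrivSqZeroExt k (Fin m → k)) (h) :
    (TrivSqZeroExt.map (R' := k) (LinearMap.proj (0 : Fin (m + 1)))).toRingHom.comp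
      (glueHom φ₁ φ₂ h) = φ₁ := by
  ext s
  · simp [fst_map]
  · simp [snd_map]

lemma funLeft_comp_glueHom (φ₁ : S →+* TrivSqZeroExt k k)
    (φ₂ : S →+* TrivSqZeroExt k (Fin m → k)) (h) :
    (TrivSqZeroExt.map (R' := k) (LinearMap.funLeft k k Fin.succ)).toRingHom.comp
      (glueHom φ₁ φ₂ h) = φ₂ := by
  ext s
  · simp [fst_map, h s]
  · simp [snd_map, LinearMap.funLeft]

/-- joint injectivity of the two projections -/
lemma proj_funLeft_jointly_injective (a b : TrivSqZeroExt k (Fin (m + 1) → k))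
    (h1 : TrivSqZeroExt.map (R' := k) (LinearMap.proj (0 : Fin (m + 1))) a =
          TrivSqZeroExt.map (R' := k) (LinearMap.proj (0 : Fin (m + 1))) b)
    (h2 : TrivSqZeroExt.map (R' := k) (LinearMap.funLeft k k Fin.succ) a =
          TrivSqZeroExt.map (R' := k) (LinearMap.funLeft k k Fin.succ) b) : a = b := by
  refine TrivSqZeroExt.ext ?_ ?_
  · have := congrArg fst h1
    simpa [fst_map] using this
  · funext i
    induction i using Fin.cases with
    | zero =>
      have := congrArg snd h1
      simpa [snd_map] using this
    | succ i =>
      have := congrFun (congrArg snd h2) i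
      simpa [snd_map, LinearMap.funLeft] using this

end Glue

instance commRingCat_comp_isLocalHom {X Y Z : CommRingCat} (f : X ⟶ Y) (g : Y ⟶ Z)
    [hf : IsLocalHom f.hom] [hg : IsLocalHom g.hom] : IsLocalHom (f ≫ g).hom :=
  inferInstanceAs (IsLocalHom (g.hom.comp f.hom))

instance commRingCat_iso_isLocalHom {X Y : CommRingCat} (e : X ≅ Y) : IsLocalHom e.hom.hom :=
  ⟨fun a ha => by simpa using ha.map e.inv.hom⟩

lemma specMap_fromSpecStalk_inj {Y : Scheme} {x : Y} {R : CommRingCat} [IsLocalRing R]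
    (α β : Y.presheaf.stalk x ⟶ R) [IsLocalHom α.hom] [IsLocalHom β.hom]
    (h : Spec.map α ≫ Y.fromSpecStalk x = Spec.map β ≫ Y.fromSpecStalk x) : α = β := by
  have h2 : (⟨x, α, ‹_›⟩ : Σ x, { f : Y.presheaf.stalk x ⟶ R // IsLocalHom f.hom }) = ⟨x, β, ‹_›⟩ :=
    (SpecToEquivOfLocalRing Y R).symm.injective h
  obtain ⟨h₁, h₂⟩ := SpecToEquivOfLocalRing_eq_iff.mp h2
  simpa using h₂


/-- `D^σ`: the first-order neighbourhood of the origin in affine `σ`-space,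
`Spec (k[x_i : i ∈ σ]/m²)`, realized as the spectrum of the trivial square-zero extension
`k ⊕ (σ → k)`. -/
noncomputable abbrev Dsigma (k : Type) [Field k] (n : ℕ) : Scheme :=
  Spec (CommRingCat.of (TrivSqZeroExt k (Fin n → k)))

/-- for `n ≥ 2` (written `n = m + 1` with `m ≥ 1`), the square-zero
neighbourhood `D^n` is the pushout `D^1 ⊔_{D^0} D^{n-1}` in the category of schemes:
for every scheme `Y`, `Hom(D^n, Y) ≅ Hom(D^1, Y) ×_{Hom(D^0, Y)} Hom(D^{n-1}, Y)`.
The closed immersions `D^1 → D^n` and `D^{n-1} → D^n` correspond to the projections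
`k[x₁,…,x_n]/m² → k[x]/m²` (first coordinate) and `→ k[x₂,…,x_n]/m²` (remaining
coordinates), and `D^0 = Spec k` maps in via the augmentations. -/
theorem stmt_11 (k : Type) [Field k] (m : ℕ) (hm : 1 ≤ m) (Y : Scheme)
    (g₁ : Spec (CommRingCat.of (TrivSqZeroExt k k)) ⟶ Y)
    (g₂ : Dsigma k m ⟶ Y)
    (hcompat :
      Spec.map (CommRingCat.ofHom (TrivSqZeroExt.fstHom k k k).toRingHom) ≫ g₁ =
      Spec.map (CommRingCat.ofHom (TrivSqZeroExt.fstHom k k (Fin m → k)).toRingHom) ≫ g₂) :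
    ∃! g : Dsigma k (m + 1) ⟶ Y,
      Spec.map (CommRingCat.ofHom
          (TrivSqZeroExt.map (R' := k) (LinearMap.proj (0 : Fin (m + 1)))).toRingHom) ≫ g = g₁ ∧
      Spec.map (CommRingCat.ofHom
          (TrivSqZeroExt.map (R' := k) (LinearMap.funLeft k k Fin.succ)).toRingHom) ≫ g = g₂ := by
  classical
  let A := CommRingCat.of (TrivSqZeroExt k (Fin (m + 1) → k))
  let B₁ := CommRingCat.of (TrivSqZeroExt k k)
  let B₂ := CommRingCat.of (TrivSqZeroExt k (Fin m → k))
  let K := CommRingCat.of k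
  let p₁ : A ⟶ B₁ :=
    CommRingCat.ofHom (TrivSqZeroExt.map (R' := k) (LinearMap.proj (0 : Fin (m + 1)))).toRingHom
  let p₂ : A ⟶ B₂ :=
    CommRingCat.ofHom (TrivSqZeroExt.map (R' := k) (LinearMap.funLeft k k Fin.succ)).toRingHom
  let q₁ : B₁ ⟶ K := CommRingCat.ofHom (TrivSqZeroExt.fstHom k k k).toRingHom
  let q₂ : B₂ ⟶ K := CommRingCat.ofHom (TrivSqZeroExt.fstHom k k (Fin m → k)).toRingHom
  haveI : IsLocalRing ↑A := tsze_isLocalRing k (Fin (m + 1) → k)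
  haveI : IsLocalRing ↑B₁ := tsze_isLocalRing k k
  haveI : IsLocalRing ↑B₂ := tsze_isLocalRing k (Fin m → k)
  haveI : IsLocalRing ↑K := inferInstanceAs (IsLocalRing k)
  haveI : IsLocalHom p₁.hom := tsze_map_isLocalHom k _ _ _
  haveI : IsLocalHom p₂.hom := tsze_map_isLocalHom k _ _ _
  haveI : IsLocalHom q₁.hom := tsze_fstHom_isLocalHom k _
  haveI : IsLocalHom q₂.hom := tsze_fstHom_isLocalHom k _
  have hcompat' : Spec.map q₁ ≫ g₁ = Spec.map q₂ ≫ g₂ := hcompat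
  let y₁ : Y := g₁.base (IsLocalRing.closedPoint B₁)
  let y₂ : Y := g₂.base (IsLocalRing.closedPoint B₂)
  have hy : y₁ = y₂ := by
    have h := congrArg (fun f : Spec K ⟶ Y => f.base (IsLocalRing.closedPoint K)) hcompat'
    simp only [Scheme.Hom.comp_apply] at h
    have e1 : (Spec.map q₁).base (IsLocalRing.closedPoint K) = IsLocalRing.closedPoint B₁ :=
      Spec_closedPoint
    have e2 : (Spec.map q₂).base (IsLocalRing.closedPoint K) = IsLocalRing.closedPoint B₂ :=
      Spec_closedPoint
    show g₁.base _ = g₂.base _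
    rw [← e1, ← e2]
    exact h
  let φ₁ : Y.presheaf.stalk y₁ ⟶ B₁ := Scheme.stalkClosedPointTo g₁
  let φ₂ : Y.presheaf.stalk y₂ ⟶ B₂ := Scheme.stalkClosedPointTo g₂
  haveI : IsLocalHom φ₁.hom := Scheme.isLocalHom_stalkClosedPointTo g₁
  haveI : IsLocalHom φ₂.hom := Scheme.isLocalHom_stalkClosedPointTo g₂
  let σ : Y.presheaf.stalk y₁ ⟶ Y.presheaf.stalk y₂ :=
    (Y.presheaf.stalkCongr (Inseparable.of_eq hy)).hom
  haveI : IsLocalHom σ.hom := commRingCat_iso_isLocalHom _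
  have hσ : Spec.map σ ≫ Y.fromSpecStalk y₁ = Y.fromSpecStalk y₂ :=
    Scheme.SpecMap_stalkSpecializes_fromSpecStalk (Inseparable.of_eq hy).ge
  have hφ₁ : Spec.map φ₁ ≫ Y.fromSpecStalk y₁ = g₁ :=
    Scheme.Spec_stalkClosedPointTo_fromSpecStalk g₁
  have hφ₂ : Spec.map φ₂ ≫ Y.fromSpecStalk y₂ = g₂ :=
    Scheme.Spec_stalkClosedPointTo_fromSpecStalk g₂
  have hfstc : φ₁ ≫ q₁ = (σ ≫ φ₂) ≫ q₂ := by
    haveI : IsLocalHom (φ₁ ≫ q₁).hom := commRingCat_comp_isLocalHom φ₁ q₁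
    haveI : IsLocalHom ((σ ≫ φ₂) ≫ q₂).hom := commRingCat_comp_isLocalHom (σ ≫ φ₂) q₂
      (hf := commRingCat_comp_isLocalHom σ φ₂)
    apply specMap_fromSpecStalk_inj
    rw [Spec.map_comp, Category.assoc, hφ₁, Spec.map_comp, Category.assoc, Spec.map_comp,
      Category.assoc, hσ, hφ₂]
    exact hcompat'
  have hfst : ∀ s, fst (φ₁ s) = fst ((σ ≫ φ₂) s) := fun s => RingHom.congr_fun (congrArg CommRingCat.Hom.hom hfstc) s
  let ψ : Y.presheaf.stalk y₁ ⟶ A := CommRingCat.ofHom (glueHom φ₁.hom (σ ≫ φ₂).hom hfst)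
  haveI hψl : IsLocalHom ψ.hom := by
    constructor
    intro s hs
    rw [isUnit_iff_isUnit_fst] at hs
    exact (Scheme.isLocalHom_stalkClosedPointTo g₁).map_nonunit s (isUnit_iff_isUnit_fst.mpr hs)
  have hc₁ : ψ ≫ p₁ = φ₁ := CommRingCat.hom_ext (proj_comp_glueHom φ₁.hom (σ ≫ φ₂).hom hfst)
  have hc₂ : ψ ≫ p₂ = σ ≫ φ₂ := CommRingCat.hom_ext (funLeft_comp_glueHom φ₁.hom (σ ≫ φ₂).hom hfst)
  refine ⟨Spec.map ψ ≫ Y.fromSpecStalk y₁, ⟨?_, ?_⟩, ?_⟩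
  · show Spec.map p₁ ≫ (Spec.map ψ ≫ Y.fromSpecStalk y₁) = g₁
    rw [← Category.assoc, ← Spec.map_comp, hc₁, hφ₁]
  · show Spec.map p₂ ≫ (Spec.map ψ ≫ Y.fromSpecStalk y₁) = g₂
    rw [← Category.assoc, ← Spec.map_comp, hc₂, Spec.map_comp, Category.assoc, hσ, hφ₂]
  · rintro g' ⟨h1', h2'⟩
    replace h1' : Spec.map p₁ ≫ g' = g₁ := h1'
    replace h2' : Spec.map p₂ ≫ g' = g₂ := h2'
    let x : Y := g'.base (IsLocalRing.closedPoint A)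
    have hx : y₁ = x := by
      have h := congrArg (fun f : Spec B₁ ⟶ Y => f.base (IsLocalRing.closedPoint B₁)) h1'
      simp only [Scheme.Hom.comp_apply] at h
      have e1 : (Spec.map p₁).base (IsLocalRing.closedPoint B₁) = IsLocalRing.closedPoint A :=
        Spec_closedPoint
      show g₁.base _ = g'.base _
      rw [← e1]
      exact h.symm
    let χ : Y.presheaf.stalk x ⟶ A := Scheme.stalkClosedPointTo g'
    haveI : IsLocalHom χ.hom := Scheme.isLocalHom_stalkClosedPointTo g'
    have hχf : Spec.map χ ≫ Y.fromSpecStalk x = g' :=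
      Scheme.Spec_stalkClosedPointTo_fromSpecStalk g'
    let τ : Y.presheaf.stalk x ⟶ Y.presheaf.stalk y₁ :=
      (Y.presheaf.stalkCongr (Inseparable.of_eq hx.symm)).hom
    haveI : IsLocalHom τ.hom := commRingCat_iso_isLocalHom _
    have hτ : Spec.map τ ≫ Y.fromSpecStalk x = Y.fromSpecStalk y₁ :=
      Scheme.SpecMap_stalkSpecializes_fromSpecStalk (Inseparable.of_eq hx.symm).ge
    have e₁ : χ ≫ p₁ = τ ≫ φ₁ := by
      haveI : IsLocalHom (χ ≫ p₁).hom := commRingCat_comp_isLocalHom χ p₁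
      haveI : IsLocalHom (τ ≫ φ₁).hom := commRingCat_comp_isLocalHom τ φ₁
      apply specMap_fromSpecStalk_inj
      rw [Spec.map_comp, Category.assoc, hχf, Spec.map_comp, Category.assoc, hτ, hφ₁]
      exact h1'
    have e₂ : χ ≫ p₂ = (τ ≫ σ) ≫ φ₂ := by
      haveI : IsLocalHom (χ ≫ p₂).hom := commRingCat_comp_isLocalHom χ p₂
      haveI : IsLocalHom ((τ ≫ σ) ≫ φ₂).hom := commRingCat_comp_isLocalHom (τ ≫ σ) φ₂
        (hf := commRingCat_comp_isLocalHom τ σ)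
      apply specMap_fromSpecStalk_inj
      rw [Spec.map_comp, Category.assoc, hχf, Spec.map_comp, Spec.map_comp, Category.assoc,
        Category.assoc, hτ, hσ, hφ₂]
      exact h2'
    have hχ : χ = τ ≫ ψ := by
      refine CommRingCat.hom_ext (RingHom.ext fun s => ?_)
      refine proj_funLeft_jointly_injective _ _ ?_ ?_
      · have h1 := RingHom.congr_fun (congrArg CommRingCat.Hom.hom e₁) s
        have h2 := RingHom.congr_fun (congrArg CommRingCat.Hom.hom hc₁) (τ s)
        exact h1.trans h2.symm
      · have h1 := RingHom.congr_fun (congrArg CommRingCat.Hom.hom e₂) s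
        have h2 := RingHom.congr_fun (congrArg CommRingCat.Hom.hom hc₂) (τ s)
        exact h1.trans h2.symm
    rw [← hχf, hχ, Spec.map_comp, Category.assoc, hτ]
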